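/- ∫_0^1 log(1 + 4 sin²(πx)) dx = 2 log((1+√5)/2). -/

import Mathlib

open Real MeasureTheory intervalIntegral

namespace ForestIndexAux

noncomputable def fA (a : ℝ) : ℝ → ℝ := fun x => Real.log (a^2 - 2*a*Real.cos (2*π*x) + 1)

noncomputable def J (a : ℝ) : ℝ := ∫ x in (0:ℝ)..1, fA a x

lemma arg_pos {a : ℝ} (ha : 1 < a) (t : ℝ) : 0 < a^2 - 2*a*Real.cos t + 1 := by
  nlinarith [Real.cos_le_one t, Real.neg_one_le_cos t]

lemma fA_cont {a : ℝ} (ha : 1 < a) : Continuous (fA a) := by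
  apply Continuous.log
  · fun_prop
  · intro x; exact (arg_pos ha (2*π*x)).ne'

lemma fA_per (a : ℝ) : Function.Periodic (fA a) 1 := by
  intro x
  unfold fA
  have : 2*π*(x+1) = 2*π*x + 2*π := by ring
  rw [this, Real.cos_add_two_pi]

lemma int_shift {g : ℝ → ℝ} (hp : Function.Periodic g 1) :
    ∫ x in (0:ℝ)..1, g (x + 1/2) = ∫ x in (0:ℝ)..1, g x := by
  rw [intervalIntegral.integral_comp_add_right]
  have := hp.intervalIntegral_add_eq (1/2 : ℝ) 0
  norm_num at this ⊢
  convert this using 2 <;> norm_num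

lemma int_double {g : ℝ → ℝ} (hg : Continuous g) (hp : Function.Periodic g 1) :
    ∫ x in (0:ℝ)..1, g (2 * x) = ∫ x in (0:ℝ)..1, g x := by
  rw [intervalIntegral.integral_comp_mul_left g (two_ne_zero)]
  have h1 : ∫ x in (1:ℝ)..2, g x = ∫ x in (0:ℝ)..1, g x := by
    have := hp.intervalIntegral_add_eq (1:ℝ) 0
    norm_num at this; exact this
  have h2 : ∫ x in (0:ℝ)..2, g x = (∫ x in (0:ℝ)..1, g x) + ∫ x in (1:ℝ)..2, g x :=
    (integral_add_adjacent_intervals (hg.intervalIntegrable _ _)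
      (hg.intervalIntegrable _ _)).symm
  norm_num [h2, h1]
  ring

lemma J_sq {a : ℝ} (ha : 1 < a) : J (a^2) = 2 * J a := by
  have ha2 : 1 < a^2 := by nlinarith
  have key : ∀ x : ℝ, fA (a^2) (2*x) = fA a x + fA a (x + 1/2) := by
    intro x
    unfold fA
    have hc1 : 2*π*(x+1/2) = 2*π*x + π := by ring
    have hc2 : 2*π*(2*x) = 2*(2*π*x) := by ring
    rw [hc1, Real.cos_add_pi, hc2, Real.cos_two_mul]
    rw [← Real.log_mul (arg_pos ha _).ne' (by
      have := arg_pos ha (2*π*x + π)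
      rw [Real.cos_add_pi] at this
      exact this.ne')]
    congr 1
    ring
  have hint1 : IntervalIntegrable (fun x => fA a x) volume 0 1 :=
    (fA_cont ha).intervalIntegrable _ _
  have hint2 : IntervalIntegrable (fun x => fA a (x + 1/2)) volume 0 1 :=
    ((fA_cont ha).comp (continuous_id.add continuous_const)).intervalIntegrable _ _
  have h1 : J (a^2) = ∫ x in (0:ℝ)..1, fA (a^2) (2*x) :=
    (int_double (fA_cont ha2) (fA_per _)).symm
  rw [h1, integral_congr (fun x _ => key x), integral_add hint1 hint2,
    int_shift (fA_per a)]
  unfold J; ring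

lemma J_bounds {a : ℝ} (ha : 1 < a) :
    2 * Real.log (a - 1) ≤ J a ∧ J a ≤ 2 * Real.log (a + 1) := by
  have ha1 : (0:ℝ) < a - 1 := by linarith
  have ha1' : (0:ℝ) < a + 1 := by linarith
  have e1 : Real.log ((a-1)^2) = 2 * Real.log (a-1) := by
    rw [Real.log_pow]; push_cast; ring
  have e2 : Real.log ((a+1)^2) = 2 * Real.log (a+1) := by
    rw [Real.log_pow]; push_cast; ring
  constructor
  · have : ∫ x in (0:ℝ)..1, (2 * Real.log (a-1)) ≤ J a := by
      apply intervalIntegral.integral_mono_on (by norm_num)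
        (intervalIntegrable_const) ((fA_cont ha).intervalIntegrable _ _)
      intro x _
      unfold fA
      have h1 : (a-1)^2 ≤ a^2 - 2*a*Real.cos (2*π*x) + 1 := by
        nlinarith [Real.cos_le_one (2*π*x)]
      calc 2 * Real.log (a-1) = Real.log ((a-1)^2) := e1.symm
        _ ≤ _ := Real.log_le_log (by positivity) h1
    simpa using this
  · have : J a ≤ ∫ x in (0:ℝ)..1, (2 * Real.log (a+1)) := by
      apply intervalIntegral.integral_mono_on (by norm_num)
        ((fA_cont ha).intervalIntegrable _ _) (intervalIntegrable_const)
      intro x _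
      unfold fA
      have h1 : a^2 - 2*a*Real.cos (2*π*x) + 1 ≤ (a+1)^2 := by
        nlinarith [Real.neg_one_le_cos (2*π*x)]
      calc Real.log _ ≤ Real.log ((a+1)^2) := Real.log_le_log (arg_pos ha _) h1
        _ = 2 * Real.log (a+1) := e2
    simpa using this

lemma J_iter {a : ℝ} (ha : 1 < a) (n : ℕ) : J (a^(2^n)) = 2^n * J a := by
  induction n with
  | zero => simp
  | succ n ih =>
      have h1 : a^(2^(n+1)) = (a^(2^n))^2 := by
        rw [← pow_mul]; ring_nf
      have hb : 1 < a^(2^n) := one_lt_pow₀ ha (by positivity)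
      rw [h1, J_sq hb, ih]
      ring

lemma J_eq {a : ℝ} (ha : 1 < a) : J a = 2 * Real.log a := by
  set C := 2 * Real.log ((a+1)/(a-1)) with hC
  have ha1 : (0:ℝ) < a - 1 := by linarith
  have hbound : ∀ n : ℕ, |J a - 2 * Real.log a| ≤ C / 2^n := by
    intro n
    set b := a^(2^n) with hbdef
    have hb : 1 < b := one_lt_pow₀ ha (by positivity)
    have hab : a ≤ b := le_self_pow₀ ha.le (by positivity)
    have hb1 : (0:ℝ) < b - 1 := by linarith
    have hbpos : (0:ℝ) < b := by linarith
    have hJa : J a = J b / 2^n := by rw [hbdef, J_iter ha n]; field_simp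
    have hlog : Real.log b = 2^n * Real.log a := by
      rw [hbdef, Real.log_pow]; push_cast; ring
    have hd : J a - 2 * Real.log a = (J b - 2 * Real.log b) / 2^n := by
      rw [hJa, hlog]; field_simp
    have hDb : |J b - 2 * Real.log b| ≤ 2 * Real.log ((b+1)/(b-1)) := by
      obtain ⟨hlo, hhi⟩ := J_bounds hb
      have e1 : Real.log (b+1) - Real.log b = Real.log ((b+1)/b) :=
        (Real.log_div (by positivity) (by positivity)).symm
      have e2 : Real.log (b-1) - Real.log b = Real.log ((b-1)/b) :=
        (Real.log_div hb1.ne' (by positivity)).symm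
      have hu : Real.log ((b+1)/b) ≤ Real.log ((b+1)/(b-1)) :=
        Real.log_le_log (by positivity)
          ((div_le_div_iff₀ hbpos hb1).mpr (by nlinarith))
      have hneg : Real.log ((b-1)/(b+1)) = - Real.log ((b+1)/(b-1)) := by
        rw [← Real.log_inv]; congr 1; field_simp
      have hl : Real.log ((b-1)/(b+1)) ≤ Real.log ((b-1)/b) :=
        Real.log_le_log (by positivity)
          ((div_le_div_iff₀ (by positivity) hbpos).mpr (by nlinarith))
      rw [abs_le]
      constructor <;> nlinarith [hneg, hl, hu, e1, e2, hlo, hhi]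
    have hCmono : 2 * Real.log ((b+1)/(b-1)) ≤ C := by
      rw [hC]
      have : Real.log ((b+1)/(b-1)) ≤ Real.log ((a+1)/(a-1)) :=
        Real.log_le_log (by positivity)
          ((div_le_div_iff₀ hb1 ha1).mpr (by nlinarith))
      linarith
    rw [hd, abs_div, abs_of_pos (by positivity : (0:ℝ) < (2:ℝ)^n)]
    gcongr
    exact hDb.trans hCmono
  have hCnn : 0 ≤ C := by
    rw [hC]
    have : (1:ℝ) ≤ (a+1)/(a-1) := by
      rw [le_div_iff₀ ha1]; linarith
    have := Real.log_nonneg this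
    linarith
  have htend : Filter.Tendsto (fun n : ℕ => C / 2^n) Filter.atTop (nhds 0) := by
    have heq : (fun n : ℕ => C / 2^n) = fun n : ℕ => C * (1/2:ℝ)^n := by
      funext n; rw [div_eq_mul_inv, ← inv_pow]; norm_num
    rw [heq]
    simpa using (tendsto_pow_atTop_nhds_zero_of_lt_one (by norm_num : (0:ℝ) ≤ 1/2)
      (by norm_num : (1/2:ℝ) < 1)).const_mul C
  have habs : |J a - 2 * Real.log a| ≤ 0 :=
    ge_of_tendsto htend (Filter.Eventually.of_forall hbound)
  have := abs_nonneg (J a - 2 * Real.log a)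
  have h0 : |J a - 2 * Real.log a| = 0 := le_antisymm habs this
  rw [abs_eq_zero] at h0
  linarith

end ForestIndexAux

open Real in
/-- `∫_0^1 log(1 + 4 sin²(πx)) dx = 2 log((1+√5)/2)`. -/
theorem integral_log_one_add_four_sin_sq :
    ∫ x in (0:ℝ)..1, Real.log (1 + 4 * Real.sin (π * x) ^ 2)
      = 2 * Real.log ((1 + Real.sqrt 5) / 2) := by
  have h5 : Real.sqrt 5 ^ 2 = 5 := Real.sq_sqrt (by norm_num)
  have h5nn : (0:ℝ) ≤ Real.sqrt 5 := Real.sqrt_nonneg 5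
  set a : ℝ := (3 + Real.sqrt 5)/2 with hadef
  have ha : 1 < a := by rw [hadef]; nlinarith
  have h3a : a^2 + 1 = 3*a := by rw [hadef]; nlinarith
  have hkey : ∀ x : ℝ, Real.log (1 + 4 * Real.sin (π*x)^2)
      = ForestIndexAux.fA a x - Real.log a := by
    intro x
    have hc : Real.cos (2*π*x) = 1 - 2 * Real.sin (π*x)^2 := by
      have h2 : 2*π*x = 2*(π*x) := by ring
      rw [h2, Real.cos_two_mul]
      nlinarith [Real.sin_sq_add_cos_sq (π*x)]
    have harg : 1 + 4*Real.sin (π*x)^2 = 3 - 2*Real.cos (2*π*x) := by rw [hc]; ring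
    have h3c : (0:ℝ) < 3 - 2*Real.cos (2*π*x) := by
      nlinarith [Real.cos_le_one (2*π*x)]
    have haq : a^2 - 2*a*Real.cos (2*π*x) + 1 = a * (3 - 2*Real.cos (2*π*x)) := by
      linear_combination h3a
    show Real.log (1 + 4 * Real.sin (π*x)^2)
      = Real.log (a^2 - 2*a*Real.cos (2*π*x) + 1) - Real.log a
    rw [harg, haq, Real.log_mul (by positivity) h3c.ne']
    ring
  have hint : IntervalIntegrable (ForestIndexAux.fA a) volume 0 1 :=
    (ForestIndexAux.fA_cont ha).intervalIntegrable _ _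
  have hstep : ∫ x in (0:ℝ)..1, Real.log (1 + 4 * Real.sin (π * x) ^ 2)
      = ForestIndexAux.J a - Real.log a := by
    rw [intervalIntegral.integral_congr (fun x _ => hkey x),
      intervalIntegral.integral_sub hint intervalIntegrable_const]
    simp [ForestIndexAux.J]
  rw [hstep, ForestIndexAux.J_eq ha]
  have hphi : ((1 + Real.sqrt 5)/2)^2 = a := by rw [hadef]; nlinarith
  rw [← hphi, Real.log_pow]
  push_cast
  ring
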